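/- The function I(x,y) = (1/y²)(x² - y + ξ/2) is a first integral of the system ẋ = y - 2x² - ξ, ẏ = -2xy on the set where y ≠ 0; that is, (y - 2x² - ξ)·∂I/∂x + (-2xy)·∂I/∂y = 0 for all (x,y) with y ≠ 0. -/

import Mathlib

theorem stmt_8 (ξ : ℝ) :
    ∀ x y : ℝ, y ≠ 0 →
      (y - 2*x^2 - ξ) * (deriv (fun t : ℝ => (1/y^2) * (t^2 - y + ξ/2)) x)
      + (-2*x*y) * (deriv (fun t : ℝ => (1/t^2) * (x^2 - t + ξ/2)) y) = 0 := by
  intro x y hy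
  have h1 : HasDerivAt (fun t : ℝ => (1/y^2) * (t^2 - y + ξ/2)) ((1/y^2) * (2*x)) x := by
    have : HasDerivAt (fun t : ℝ => t^2 - y + ξ/2) (2*x) x := by
      simpa using (((hasDerivAt_pow 2 x).sub_const y).add_const (ξ/2))
    exact this.const_mul (1/y^2)
  have h2 : HasDerivAt (fun t : ℝ => (1/t^2) * (x^2 - t + ξ/2))
      ((-(2*y) / (y^2)^2) * (x^2 - y + ξ/2) + (1/y^2) * (-1)) y := by
    have ha : HasDerivAt (fun t : ℝ => 1/t^2) (-(2*y) / (y^2)^2) y := by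
      have : HasDerivAt (fun t : ℝ => 1/t^2) _ y := (hasDerivAt_const y (1:ℝ)).div (hasDerivAt_pow 2 y) (pow_ne_zero 2 hy)
      convert this using 1
      push_cast
      norm_num
    have hb : HasDerivAt (fun t : ℝ => x^2 - t + ξ/2) (-1) y := by
      simpa using ((hasDerivAt_id y).const_sub (x^2)).add_const (ξ/2)
    exact (ha.mul hb : HasDerivAt (fun t : ℝ => (1/t^2) * (x^2 - t + ξ/2)) _ y)
  rw [h1.deriv, h2.deriv]
  field_simp
  ring
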